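/- arXiv:2310.16502 — 2 statements merged into one kernel-verified Lean document; each statement's English description precedes it below -/
import Mathlib

section
/- Assume the intersection property holds for conditional independence statements of E against partitions of the coordinates of X = (X_1,...,X_p): for any partition A, B, C of {1,...,p}, if E ⊥ X_A | (X_B, X_C) and E ⊥ X_B | (X_A, X_C) then E ⊥ (X_A, X_B) | X_C. Define W as a maximizer over subsets U of {1,...,p} of |U| subject to E ⊥ X_U | X_{-U}, and define W̃ = { j : E ⊥ X_j | X_{-j} }. Then W ⊆ W̃, and under the intersection property W = W̃. -/
open MeasureTheory ProbabilityTheory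

section Aux

variable {Ω : Type*} {mΩ : MeasurableSpace Ω} {p : ℕ}

/-- The σ-algebra generated by the coordinates of `X` in `S`. -/
noncomputable def mVec (X : Fin p → Ω → ℝ) (S : Finset (Fin p)) : MeasurableSpace Ω :=
  ⨆ i ∈ S, MeasurableSpace.comap (X i) inferInstance

lemma comap_vec_eq (X : Fin p → Ω → ℝ) (S : Finset (Fin p)) :
    MeasurableSpace.comap (fun ω (j : S) => X j ω) MeasurableSpace.pi = mVec X S := by
  rw [MeasurableSpace.pi, MeasurableSpace.comap_iSup, mVec]
  calc (⨆ i : S, (Real.measurableSpace.comap fun b : S → ℝ => b i).comap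
          (fun ω (j : S) => X j ω))
      = ⨆ i : S, Real.measurableSpace.comap (X i) := by
        refine iSup_congr fun i => ?_
        rw [MeasurableSpace.comap_comp]
        rfl
    _ = ⨆ i ∈ S, MeasurableSpace.comap (X i) inferInstance := by
        rw [iSup_subtype]

lemma mVec_union (X : Fin p → Ω → ℝ) (S T : Finset (Fin p)) :
    mVec X (S ∪ T) = mVec X S ⊔ mVec X T := by
  simp only [mVec, Finset.mem_union, iSup_or, iSup_sup_eq]

lemma mVec_mono (X : Fin p → Ω → ℝ) {S T : Finset (Fin p)} (h : S ⊆ T) :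
    mVec X S ≤ mVec X T :=
  biSup_mono fun i hi => h hi

lemma mVec_le (X : Fin p → Ω → ℝ) (hX : ∀ i, Measurable (X i)) (S : Finset (Fin p)) :
    mVec X S ≤ mΩ :=
  iSup₂_le fun i _ => (hX i).comap_le

lemma condIndepFun_of_eq [StandardBorelSpace Ω] {μ : Measure Ω} [IsFiniteMeasure μ]
    {m₁ m₂ : MeasurableSpace Ω} (h : m₁ = m₂) (h₁ : m₁ ≤ mΩ) (h₂ : m₂ ≤ mΩ)
    {β γ : Type*} {mβ : MeasurableSpace β} {mγ : MeasurableSpace γ}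
    {f : Ω → β} {g : Ω → γ} (hc : CondIndepFun m₁ h₁ f g μ) :
    CondIndepFun m₂ h₂ f g μ := by
  subst h; exact hc

end Aux

lemma condexp_sup_of_condIndepFun {Ω : Type*} {m' mΩ : MeasurableSpace Ω}
    [StandardBorelSpace Ω]
    (μ : Measure Ω) [IsProbabilityMeasure μ] (hm' : m' ≤ mΩ)
    {β γ : Type*} {mβ : MeasurableSpace β} {mγ : MeasurableSpace γ}
    {f : Ω → β} {G : Ω → γ} (hf : Measurable f) (hG : Measurable G)
    (hCI : CondIndepFun m' hm' f G μ) {s : Set β} (hs : MeasurableSet s) :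
    (μ⟦f ⁻¹' s | m' ⊔ mγ.comap G⟧) =ᵐ[μ] μ⟦f ⁻¹' s | m'⟧ := by
  have hGle : mγ.comap G ≤ mΩ := hG.comap_le
  have hM : m' ⊔ mγ.comap G ≤ mΩ := sup_le hm' hGle
  set s' := f ⁻¹' s with hs'def
  have hs'Ω : MeasurableSet s' := hf hs
  set Y := μ[Set.indicator s' fun _ => (1:ℝ) | m'] with hYdef
  have hprod := (condIndepFun_iff_condExp_inter_preimage_eq_mul hf hG).mp hCI
  set π : Set (Set Ω) :=
    {u | ∃ a b, MeasurableSet[m'] a ∧ MeasurableSet[mγ.comap G] b ∧ u = a ∩ b} with hπdef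
  have hgen : m' ⊔ mγ.comap G = MeasurableSpace.generateFrom π := by
    refine le_antisymm (sup_le ?_ ?_) (MeasurableSpace.generateFrom_le ?_)
    · intro a ha
      exact MeasurableSpace.measurableSet_generateFrom
        ⟨a, Set.univ, ha, MeasurableSet.univ, by simp⟩
    · intro b hb
      exact MeasurableSpace.measurableSet_generateFrom
        ⟨Set.univ, b, MeasurableSet.univ, hb, by simp⟩
    · rintro u ⟨a, b, ha, hb, rfl⟩
      exact ((le_sup_left : m' ≤ m' ⊔ mγ.comap G) a ha).inter
        ((le_sup_right : mγ.comap G ≤ m' ⊔ mγ.comap G) b hb)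
  have hpi : IsPiSystem π := by
    rintro u ⟨a, b, ha, hb, rfl⟩ v ⟨a', b', ha', hb', rfl⟩ _
    exact ⟨a ∩ a', b ∩ b', ha.inter ha', hb.inter hb', by ext x; simp; tauto⟩
  have hind : Integrable (Set.indicator s' fun _ => (1:ℝ)) μ := (integrable_const 1).indicator hs'Ω
  have key : ∀ A, MeasurableSet[m' ⊔ mγ.comap G] A →
      ∫ x in A, Y x ∂μ = ∫ x in A, Set.indicator s' (fun _ => (1:ℝ)) x ∂μ := by
    have H := @MeasurableSpace.induction_on_inter Ω (m' ⊔ mγ.comap G)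
      (fun A _ => ∫ x in A, Y x ∂μ = ∫ x in A, Set.indicator s' (fun _ => (1:ℝ)) x ∂μ)
      π hgen hpi (by simp) ?_ ?_ ?_
    · exact fun A hA => H A hA
    · -- basic
      rintro u ⟨a, b, ha, ⟨t, ht, rfl⟩, rfl⟩
      have haΩ : MeasurableSet a := hm' a ha
      have hbΩ : MeasurableSet (G ⁻¹' t) := hG ht
      set F := Set.indicator (G ⁻¹' t) (fun _ => (1:ℝ)) with hFdef
      have e1 : (Y * F) = Set.indicator (G ⁻¹' t) Y := by
        funext ω; by_cases hω : ω ∈ G ⁻¹' t <;> simp [hFdef, hω]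
      have hint1 : Integrable (Y * F) μ := by
        rw [e1]; exact integrable_condExp.indicator hbΩ
      have hFint : Integrable F μ := (integrable_const 1).indicator hbΩ
      have hmul : (μ[Y * F|m']) =ᵐ[μ] Y * μ[F|m'] :=
        condExp_mul_of_stronglyMeasurable_left stronglyMeasurable_condExp hint1 hFint
      have hp : (μ⟦s' ∩ G ⁻¹' t|m'⟧) =ᵐ[μ] Y * μ[F|m'] := hprod s t hs ht
      calc ∫ x in a ∩ G ⁻¹' t, Y x ∂μ
          = ∫ x in a, Set.indicator (G ⁻¹' t) Y x ∂μ := (setIntegral_indicator hbΩ).symm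
        _ = ∫ x in a, (Y * F) x ∂μ := by rw [e1]
        _ = ∫ x in a, (μ[Y * F|m']) x ∂μ := (setIntegral_condExp hm' hint1 ha).symm
        _ = ∫ x in a, (μ⟦s' ∩ G ⁻¹' t|m'⟧) x ∂μ := by
            refine setIntegral_congr_ae haΩ ?_
            filter_upwards [hmul, hp] with ω h1 h2 _
            rw [h1, h2]
        _ = ∫ x in a, Set.indicator (s' ∩ G ⁻¹' t) (fun _ => (1:ℝ)) x ∂μ :=
            setIntegral_condExp hm' ((integrable_const 1).indicator (hs'Ω.inter hbΩ)) ha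
        _ = ∫ x in a ∩ (s' ∩ G ⁻¹' t), (1:ℝ) ∂μ := setIntegral_indicator (hs'Ω.inter hbΩ)
        _ = ∫ x in (a ∩ G ⁻¹' t) ∩ s', (1:ℝ) ∂μ := by
            rw [show a ∩ (s' ∩ G ⁻¹' t) = (a ∩ G ⁻¹' t) ∩ s' by ext x; simp; tauto]
        _ = ∫ x in a ∩ G ⁻¹' t, Set.indicator s' (fun _ => (1:ℝ)) x ∂μ :=
            (setIntegral_indicator hs'Ω).symm
    · -- compl
      intro A hAM hC
      have hAΩ : MeasurableSet A := hM A hAM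
      have h1 := integral_add_compl hAΩ (integrable_condExp : Integrable Y μ)
      have h2 := integral_add_compl hAΩ hind
      have h3 : ∫ x, Y x ∂μ = ∫ x, Set.indicator s' (fun _ => (1:ℝ)) x ∂μ :=
        integral_condExp hm'
      linarith
    · -- union
      intro g hdis hmeas hC
      have hgΩ : ∀ i, MeasurableSet (g i) := fun i => hM _ (hmeas i)
      rw [integral_iUnion hgΩ hdis integrable_condExp.integrableOn,
        integral_iUnion hgΩ hdis hind.integrableOn]
      exact tsum_congr hC
  refine (ae_eq_condExp_of_forall_setIntegral_eq hM hind
    (fun A _ _ => integrable_condExp.integrableOn) (fun A hA _ => key A hA) ?_).symm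
  exact (stronglyMeasurable_condExp.mono (le_sup_left : m' ≤ m' ⊔ mγ.comap G)).aestronglyMeasurable

/-- Weak union for conditional independence. -/
lemma weakUnion {Ω : Type*} {m' m₂ mΩ : MeasurableSpace Ω} [StandardBorelSpace Ω]
    (μ : Measure Ω) [IsProbabilityMeasure μ]
    (hm' : m' ≤ mΩ) (hm'' : m' ⊔ m₂ ≤ mΩ)
    {β γ δ : Type*} {mβ : MeasurableSpace β} {mγ : MeasurableSpace γ} {mδ : MeasurableSpace δ}
    {f : Ω → β} {G : Ω → γ} {g : Ω → δ}
    (hf : Measurable f) (hG : Measurable G) (hg : Measurable g)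
    (hgG : MeasurableSpace.comap g mδ ≤ MeasurableSpace.comap G mγ)
    (h2G : m₂ ≤ MeasurableSpace.comap G mγ)
    (hCI : CondIndepFun m' hm' f G μ) :
    CondIndepFun (m' ⊔ m₂) hm'' f g μ := by
  have hGle : mγ.comap G ≤ mΩ := hG.comap_le
  have hM : m' ⊔ mγ.comap G ≤ mΩ := sup_le hm' hGle
  have hnM : m' ⊔ m₂ ≤ m' ⊔ mγ.comap G := sup_le le_sup_left (le_sup_of_le_right h2G)
  rw [condIndepFun_iff_condExp_inter_preimage_eq_mul hf hg]
  intro s t hs ht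
  set s' := f ⁻¹' s with hs'def
  set t' := g ⁻¹' t with ht'def
  have hs'Ω : MeasurableSet s' := hf hs
  have ht'Ω : MeasurableSet t' := hg ht
  have ht'M : MeasurableSet[m' ⊔ mγ.comap G] t' :=
    (le_sup_of_le_right (le_trans hgG le_rfl) : mδ.comap g ≤ m' ⊔ mγ.comap G) t' ⟨t, ht, rfl⟩
  have hYs : (μ⟦s' | m' ⊔ mγ.comap G⟧) =ᵐ[μ] μ⟦s' | m'⟧ :=
    condexp_sup_of_condIndepFun μ hm' hf hG hCI hs
  have hA : (μ⟦s' | m' ⊔ m₂⟧) =ᵐ[μ] μ⟦s' | m'⟧ := by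
    have h1 : (μ⟦s' | m' ⊔ m₂⟧) =ᵐ[μ]
        μ[μ⟦s' | m' ⊔ mγ.comap G⟧ | m' ⊔ m₂] :=
      (condExp_condExp_of_le hnM hM).symm
    refine h1.trans ?_
    have h2 : μ[μ⟦s' | m' ⊔ mγ.comap G⟧ | m' ⊔ m₂] =ᵐ[μ]
        μ[μ⟦s' | m'⟧ | m' ⊔ m₂] := condExp_congr_ae hYs
    refine h2.trans ?_
    rw [condExp_of_stronglyMeasurable hm''
      (stronglyMeasurable_condExp.mono le_sup_left) integrable_condExp]
  set Y := μ[Set.indicator s' fun _ => (1:ℝ) | m'] with hYdef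
  set F := Set.indicator t' (fun _ => (1:ℝ)) with hFdef
  have hFM : StronglyMeasurable[m' ⊔ mγ.comap G] F :=
    stronglyMeasurable_const.indicator ht'M
  have hFn : Integrable F μ := (integrable_const 1).indicator ht'Ω
  have e1 : (F * Y) = Set.indicator t' Y := by
    funext ω; by_cases hω : ω ∈ t' <;> simp [hFdef, hω]
  have e2 : Set.indicator (s' ∩ t') (fun _ => (1:ℝ)) = F * Set.indicator s' (fun _ => (1:ℝ)) := by
    funext ω
    by_cases h1 : ω ∈ s' <;> by_cases h2 : ω ∈ t' <;>
      simp [hFdef, h1, h2, Set.indicator_of_mem, Set.indicator_of_notMem]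
  have hintFind : Integrable (F * Set.indicator s' fun _ => (1:ℝ)) μ := by
    rw [← e2]; exact (integrable_const 1).indicator (hs'Ω.inter ht'Ω)
  have hB : (μ⟦s' ∩ t' | m' ⊔ mγ.comap G⟧) =ᵐ[μ] F * Y := by
    have h1 : (μ⟦s' ∩ t' | m' ⊔ mγ.comap G⟧)
        = μ[F * Set.indicator s' (fun _ => (1:ℝ)) | m' ⊔ mγ.comap G] := by rw [← e2]
    rw [h1]
    refine (condExp_mul_of_stronglyMeasurable_left hFM hintFind
      ((integrable_const 1).indicator hs'Ω)).trans ?_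
    exact Filter.EventuallyEq.mul Filter.EventuallyEq.rfl hYs
  have hC : (μ⟦s' ∩ t' | m' ⊔ m₂⟧) =ᵐ[μ] Y * μ[F | m' ⊔ m₂] := by
    have h1 : (μ⟦s' ∩ t' | m' ⊔ m₂⟧) =ᵐ[μ]
        μ[μ⟦s' ∩ t' | m' ⊔ mγ.comap G⟧ | m' ⊔ m₂] :=
      (condExp_condExp_of_le hnM hM).symm
    refine h1.trans ((condExp_congr_ae hB).trans ?_)
    have e3 : (F * Y) = (Y * F) := mul_comm F Y
    rw [e3]
    have hintYF : Integrable (Y * F) μ := by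
      rw [show (Y * F) = Set.indicator t' Y from (mul_comm Y F).trans e1]
      exact integrable_condExp.indicator ht'Ω
    exact condExp_mul_of_stronglyMeasurable_left (stronglyMeasurable_condExp.mono le_sup_left)
      hintYF hFn
  refine hC.trans ?_
  filter_upwards [hA] with ω hω
  simp only [Pi.mul_apply]
  rw [hω]

/-- `CI μ E X hX A B` means that `E` is conditionally independent of the subvector `X_A`
given the subvector `X_B`. -/
def CI {Ω : Type*} {mΩ : MeasurableSpace Ω} [StandardBorelSpace Ω]
    (μ : Measure Ω) [IsFiniteMeasure μ] {p : ℕ}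
    (E : Ω → ℝ) (X : Fin p → Ω → ℝ) (hX : ∀ i, Measurable (X i))
    (A B : Finset (Fin p)) : Prop :=
  CondIndepFun (MeasurableSpace.comap (fun ω (j : B) => X j ω) inferInstance)
    (Measurable.comap_le (measurable_pi_lambda _ fun j => hX j))
    E (fun ω (j : A) => X j ω) μ

/-- Let `W` be a maximizer of `|U|` among subsets `U` with `E ⊥ X_U | X_{-U}` and
`W̃ = {j : E ⊥ X_j | X_{-j}}`. Then `W ⊆ W̃`, and if the intersection property holds,
`W = W̃`. -/
theorem markov_boundary_characterization {Ω : Type*} {mΩ : MeasurableSpace Ω}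
    [StandardBorelSpace Ω] (μ : Measure Ω) [IsProbabilityMeasure μ] {p : ℕ}
    (E : Ω → ℝ) (X : Fin p → Ω → ℝ) (hE : Measurable E) (hX : ∀ i, Measurable (X i))
    (W Wt : Finset (Fin p))
    (hWci : CI μ E X hX W Wᶜ)
    (hWmax : ∀ U : Finset (Fin p), CI μ E X hX U Uᶜ → U.card ≤ W.card)
    (hWt : ∀ j : Fin p, j ∈ Wt ↔ CI μ E X hX {j} {j}ᶜ) :
    W ⊆ Wt ∧
      ((∀ A B C : Finset (Fin p), Disjoint A B → Disjoint A C → Disjoint B C →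
          A ∪ B ∪ C = Finset.univ →
          CI μ E X hX A (B ∪ C) → CI μ E X hX B (A ∪ C) → CI μ E X hX (A ∪ B) C) →
        W = Wt) := by
  classical
  have hsub : W ⊆ Wt := by
    intro j hj
    refine (hWt j).mpr ?_
    -- weak union
    have hm' : MeasurableSpace.comap (fun ω (i : (Wᶜ : Finset (Fin p))) => X i ω)
        MeasurableSpace.pi ≤ mΩ :=
      Measurable.comap_le (measurable_pi_lambda _ fun i => hX i)
    have hm'' : MeasurableSpace.comap (fun ω (i : (Wᶜ : Finset (Fin p))) => X i ω)
        MeasurableSpace.pi ⊔ mVec X (W \ {j}) ≤ mΩ :=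
      sup_le hm' (mVec_le X hX _)
    have hw := weakUnion (m₂ := mVec X (W \ {j})) μ hm' hm''
      (f := E) (G := fun ω (i : W) => X i ω) (g := fun ω (i : ({j} : Finset (Fin p))) => X i ω)
      hE (measurable_pi_lambda _ fun i => hX i) (measurable_pi_lambda _ fun i => hX i)
      (by rw [comap_vec_eq, comap_vec_eq]
          exact mVec_mono X (Finset.singleton_subset_iff.mpr hj))
      (by rw [comap_vec_eq]
          exact mVec_mono X (Finset.sdiff_subset))
      hWci
    have hEq : MeasurableSpace.comap (fun ω (i : (Wᶜ : Finset (Fin p))) => X i ω)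
        MeasurableSpace.pi ⊔ mVec X (W \ {j})
        = MeasurableSpace.comap
            (fun ω (i : (({j} : Finset (Fin p))ᶜ : Finset (Fin p))) => X i ω)
            MeasurableSpace.pi := by
      rw [comap_vec_eq, comap_vec_eq, ← mVec_union]
      congr 1
      ext i
      simp only [Finset.mem_union, Finset.mem_compl, Finset.mem_sdiff, Finset.mem_singleton]
      constructor
      · rintro (h | ⟨_, h⟩)
        · exact fun hij => h (hij ▸ hj)
        · exact h
      · intro h
        by_cases hiW : i ∈ W
        · exact Or.inr ⟨hiW, h⟩
        · exact Or.inl hiW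
    exact condIndepFun_of_eq hEq hm''
      (Measurable.comap_le (measurable_pi_lambda _ fun i => hX i)) hw
  refine ⟨hsub, fun hInt => ?_⟩
  have key : ∀ T : Finset (Fin p), T ⊆ Wt → CI μ E X hX (W ∪ T) (W ∪ T)ᶜ := by
    intro T
    induction T using Finset.induction_on with
    | empty => intro _; simpa using hWci
    | @insert j T hjT ih =>
      intro hsub'
      have hci := ih ((Finset.subset_insert j T).trans hsub')
      by_cases hjWT : j ∈ W ∪ T
      · rw [show W ∪ insert j T = W ∪ T by
          ext i; simp only [Finset.mem_union, Finset.mem_insert]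
          constructor
          · rintro (h | (rfl | h))
            · exact Or.inl h
            · simpa using hjWT
            · exact Or.inr h
          · rintro (h | h)
            · exact Or.inl h
            · exact Or.inr (Or.inr h)]
        exact hci
      · have hj' : j ∈ Wt := hsub' (Finset.mem_insert_self j T)
        have hcj : CI μ E X hX {j} {j}ᶜ := (hWt j).mp hj'
        have h1 : CI μ E X hX (W ∪ T) ({j} ∪ (W ∪ T ∪ {j})ᶜ) := by
          rw [show ({j} ∪ (W ∪ T ∪ {j})ᶜ : Finset (Fin p)) = (W ∪ T)ᶜ by
            ext i
            simp only [Finset.mem_union, Finset.mem_compl, Finset.mem_singleton]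
            constructor
            · rintro (rfl | h)
              · exact fun h => hjWT (by simpa using h)
              · tauto
            · intro h
              by_cases hij : i = j
              · exact Or.inl hij
              · exact Or.inr (by tauto)]
          exact hci
        have h2 : CI μ E X hX {j} (W ∪ T ∪ (W ∪ T ∪ {j})ᶜ) := by
          rw [show (W ∪ T ∪ (W ∪ T ∪ {j})ᶜ : Finset (Fin p)) = ({j} : Finset (Fin p))ᶜ by
            ext i
            simp only [Finset.mem_union, Finset.mem_compl, Finset.mem_singleton]
            constructor
            · rintro (h | h)
              · rintro rfl; exact hjWT (by simpa using h)
              · tauto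
            · intro h
              by_cases hiWT : i ∈ W ∨ i ∈ T
              · exact Or.inl hiWT
              · exact Or.inr (by tauto)]
          exact hcj
        have dAB : Disjoint (W ∪ T) ({j} : Finset (Fin p)) :=
          Finset.disjoint_singleton_right.mpr hjWT
        have dAC : Disjoint (W ∪ T) (W ∪ T ∪ {j})ᶜ :=
          Finset.disjoint_left.mpr fun i hi hic =>
            (Finset.mem_compl.mp hic) (Finset.mem_union_left _ hi)
        have dBC : Disjoint ({j} : Finset (Fin p)) (W ∪ T ∪ {j})ᶜ :=
          Finset.disjoint_left.mpr fun i hi hic =>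
            (Finset.mem_compl.mp hic) (Finset.mem_union_right _ hi)
        have cover : (W ∪ T) ∪ {j} ∪ (W ∪ T ∪ {j})ᶜ = Finset.univ := Finset.union_compl _
        have hres := hInt (W ∪ T) {j} (W ∪ T ∪ {j})ᶜ dAB dAC dBC cover h1 h2
        rw [show W ∪ insert j T = W ∪ T ∪ {j} by
          ext i; simp only [Finset.mem_union, Finset.mem_insert, Finset.mem_singleton]; tauto]
        exact hres
  have hWtci : CI μ E X hX Wt Wtᶜ := by
    have h := key Wt le_rfl
    rwa [Finset.union_eq_right.mpr hsub] at h
  exact Finset.eq_of_subset_of_card_le hsub (hWmax Wt hWtci)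
end

section
/- Let E be a real random variable and X_U a random vector such that the conditional distribution of E given X_U is continuous and symmetric around 0. Let μ be the law of E and ν the law of |E|. Then ∫_0^∞ Var(P(|E| ≥ t | X_U)) dν(t) = 4 ∫_{-∞}^∞ Var(P(E ≥ t | X_U)) dμ(t), i.e., the Azadkia–Chatterjee numerator Q satisfies Q(|E|, X_U) = 4 Q(E, X_U). -/
open MeasureTheory ProbabilityTheory

section Aux

variable {Ω : Type*} {mΩ : MeasurableSpace Ω} {μ : Measure Ω}

lemma variance_congr_ae' {f g : Ω → ℝ} (h : f =ᵐ[μ] g) : variance f μ = variance g μ := by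
  unfold variance evariance
  rw [integral_congr_ae h]
  congr 1
  refine lintegral_congr_ae ?_
  filter_upwards [h] with ω hω
  rw [hω]

lemma variance_const_sub' [IsProbabilityMeasure μ] {f : Ω → ℝ} (hf : Integrable f μ) (c : ℝ) :
    variance (fun ω => c - f ω) μ = variance f μ := by
  unfold variance evariance
  have hi : (∫ ω, (c - f ω) ∂μ) = c - ∫ ω, f ω ∂μ := by
    rw [integral_sub (integrable_const c) hf, integral_const]; simp
  rw [hi]
  congr 1
  refine lintegral_congr fun ω => ?_
  congr 1
  rw [show c - f ω - (c - ∫ ω, f ω ∂μ) = -(f ω - ∫ ω, f ω ∂μ) by ring, enorm_neg]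

end Aux

/-- `condVarProb μ Y X t` is the variance of the conditional probability
`P(Y ≥ t | X)` (as a random variable). -/
noncomputable def condVarProb {Ω β : Type*} [MeasurableSpace Ω] [MeasurableSpace β]
    (μ : Measure Ω) (Y : Ω → ℝ) (X : Ω → β) (t : ℝ) : ℝ :=
  variance (μ[Set.indicator {ω | t ≤ Y ω} (fun _ => (1 : ℝ)) |
    MeasurableSpace.comap X inferInstance]) μ

/-- If the conditional distribution of `E` given `X_U` is continuous and symmetric around `0`,
then the Azadkia–Chatterjee numerator satisfies `Q(|E|, X_U) = 4 Q(E, X_U)`: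
`∫_0^∞ Var(P(|E| ≥ t | X_U)) dν(t) = 4 ∫ Var(P(E ≥ t | X_U)) dμ(t)`, where `μ, ν` are the
laws of `E` and `|E|`. -/
theorem Q_abs_eq_four_Q {Ω β : Type*} {mΩ : MeasurableSpace Ω} [StandardBorelSpace Ω]
    [MeasurableSpace β] {μ : Measure Ω} [IsProbabilityMeasure μ]
    (E : Ω → ℝ) (X : Ω → β) (hE : Measurable E) (hX : Measurable X)
    (hsymm : ∀ᵐ x ∂(μ.map X), (condDistrib E X μ x).map Neg.neg = condDistrib E X μ x)
    (hcont : ∀ᵐ x ∂(μ.map X), ∀ t : ℝ, condDistrib E X μ x {t} = 0) :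
    ∫ t in Set.Ioi (0 : ℝ), condVarProb μ (fun ω => |E ω|) X t
        ∂(μ.map (fun ω => |E ω|)) =
      4 * ∫ t, condVarProb μ E X t ∂(μ.map E) := by
    classical
  set κ := condDistrib E X μ with hκ
  haveI hMk : IsMarkovKernel κ := by rw [hκ]; infer_instance
  -- basic objects
  set W : ℝ → Ω → ℝ := fun t ω => (κ (X ω) (Set.Ici t)).toReal with hWdef
  set V : ℝ → Ω → ℝ := fun t ω => (κ (X ω) {s : ℝ | t ≤ |s|}).toReal with hVdef
  have hSabs : ∀ t : ℝ, MeasurableSet {s : ℝ | t ≤ |s|} := fun t =>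
    measurableSet_le measurable_const measurable_abs
  -- measurability and integrability
  have hW_meas : ∀ t, Measurable (W t) := fun t =>
    ((Kernel.measurable_coe κ measurableSet_Ici).comp hX).ennreal_toReal
  have hV_meas : ∀ t, Measurable (V t) := fun t =>
    ((Kernel.measurable_coe κ (hSabs t)).comp hX).ennreal_toReal
  have hW_int : ∀ t, Integrable (W t) μ := fun t =>
    integrable_toReal_condDistrib hX.aemeasurable measurableSet_Ici
  have hV_int : ∀ t, Integrable (V t) μ := fun t =>
    integrable_toReal_condDistrib hX.aemeasurable (hSabs t)
  have hW01 : ∀ t ω, W t ω ∈ Set.Icc (0:ℝ) 1 := by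
    intro t ω
    constructor
    · exact ENNReal.toReal_nonneg
    · have h1 : κ (X ω) (Set.Ici t) ≤ 1 := prob_le_one (μ := κ (X ω))
      simpa using ENNReal.toReal_mono ENNReal.one_ne_top h1
  have hV01 : ∀ t ω, V t ω ∈ Set.Icc (0:ℝ) 1 := by
    intro t ω
    constructor
    · exact ENNReal.toReal_nonneg
    · have h1 : κ (X ω) {s : ℝ | t ≤ |s|} ≤ 1 := prob_le_one (μ := κ (X ω))
      simpa using ENNReal.toReal_mono ENNReal.one_ne_top h1
  -- identification of condVarProb with variance of kernel probabilities
  have hgK : ∀ t, condVarProb μ E X t = variance (W t) μ := by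
    intro t
    have h := condDistrib_ae_eq_condExp (μ := μ) hX hE (measurableSet_Ici (a := t))
    have hpre : E ⁻¹' Set.Ici t = {ω | t ≤ E ω} := rfl
    rw [hpre] at h
    exact (variance_congr_ae' h).symm
  have hhK : ∀ t, condVarProb μ (fun ω => |E ω|) X t = variance (V t) μ := by
    intro t
    have h := condDistrib_ae_eq_condExp (μ := μ) hX hE (hSabs t)
    have hpre : E ⁻¹' {s : ℝ | t ≤ |s|} = {ω | t ≤ |E ω|} := rfl
    rw [hpre] at h
    exact (variance_congr_ae' h).symm
  -- transported a.e. hypotheses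
  have hae : ∀ᵐ ω ∂μ, ((κ (X ω)).map Neg.neg = κ (X ω)) ∧ (∀ t : ℝ, κ (X ω) {t} = 0) := by
    filter_upwards [ae_of_ae_map hX.aemeasurable hsymm, ae_of_ae_map hX.aemeasurable hcont]
      with ω h1 h2
    exact ⟨h1, h2⟩
  -- negation identity for the kernel measures
  have hIicIci : ∀ (ν : Measure ℝ), ν.map Neg.neg = ν → ∀ t : ℝ,
      ν (Set.Iic (-t)) = ν (Set.Ici t) := by
    intro ν h1 t
    have hset : Set.Iic (-t) = Neg.neg ⁻¹' (Set.Ici t) := by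
      ext s
      simp [le_neg]
    rw [hset, ← Measure.map_apply measurable_neg measurableSet_Ici, h1]
  -- key fact 1 : for t > 0, V t = 2 * W t a.e.
  have key1 : ∀ t : ℝ, 0 < t → V t =ᵐ[μ] fun ω => 2 * W t ω := by
    intro t ht
    filter_upwards [hae] with ω hω
    obtain ⟨h1, h2⟩ := hω
    have hset : {s : ℝ | t ≤ |s|} = Set.Ici t ∪ Set.Iic (-t) := by
      ext s
      simp [le_abs, le_neg, or_comm]
    have hdisj : Disjoint (Set.Ici t) (Set.Iic (-t)) := by
      refine Set.disjoint_left.mpr fun s hs hs' => ?_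
      simp only [Set.mem_Ici] at hs
      simp only [Set.mem_Iic] at hs'
      linarith
    have : V t ω = (κ (X ω) (Set.Ici t) + κ (X ω) (Set.Iic (-t))).toReal := by
      simp only [hVdef]
      rw [hset, measure_union hdisj measurableSet_Iic]
    rw [this, hIicIci _ h1 t, ENNReal.toReal_add (measure_ne_top _ _) (measure_ne_top _ _)]
    simp only [hWdef]
    ring
  -- key fact 2 : W (-t) = 1 - W t a.e.
  have key2 : ∀ t : ℝ, W (-t) =ᵐ[μ] fun ω => 1 - W t ω := by
    intro t
    filter_upwards [hae] with ω hω
    obtain ⟨h1, h2⟩ := hω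
    have hIio : κ (X ω) (Set.Iio (-t)) = κ (X ω) (Set.Iic (-t)) := by
      refine le_antisymm (measure_mono Set.Iio_subset_Iic_self) ?_
      calc κ (X ω) (Set.Iic (-t)) = κ (X ω) (Set.Iio (-t) ∪ {-t}) := by
            rw [Set.Iio_union_right]
        _ ≤ κ (X ω) (Set.Iio (-t)) + κ (X ω) {-t} := measure_union_le _ _
        _ = κ (X ω) (Set.Iio (-t)) := by rw [h2 (-t), add_zero]
    have hcompl : κ (X ω) (Set.Ici (-t)) = 1 - κ (X ω) (Set.Iio (-t)) := by
      rw [← Set.compl_Iio, measure_compl measurableSet_Iio (measure_ne_top _ _), measure_univ]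
    have hval : κ (X ω) (Set.Ici (-t)) = 1 - κ (X ω) (Set.Ici t) := by
      rw [hcompl, hIio, hIicIci _ h1 t]
    simp only [hWdef]
    rw [hval, ENNReal.toReal_sub_of_le (prob_le_one (μ := κ (X ω))) ENNReal.one_ne_top,
      ENNReal.toReal_one]
  -- E has no atom at 0
  have hE0 : μ (E ⁻¹' {(0:ℝ)}) = 0 := by
    have h := setLIntegral_preimage_condDistrib (μ := μ) hX hE.aemeasurable
      (measurableSet_singleton (0:ℝ)) MeasurableSet.univ
    simp only [Set.preimage_univ, Measure.restrict_univ, Set.univ_inter] at h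
    rw [← h]
    have : ∀ᵐ ω ∂μ, κ (X ω) {(0:ℝ)} = 0 := by
      filter_upwards [hae] with ω hω using hω.2 0
    rw [lintegral_congr_ae this, lintegral_zero]
  have hEne : ∀ᵐ ω ∂μ, E ω ≠ 0 := by
    rw [ae_iff]
    convert hE0 using 2
    ext ω
    simp
  -- measurability of the variance functions, via antitone decompositions
  have hWanti : ∀ ω, Antitone fun t => W t ω := by
    intro ω t t' htt'
    exact ENNReal.toReal_mono (measure_ne_top _ _)
      (measure_mono (Set.Ici_subset_Ici.mpr htt'))
  have hVanti : ∀ ω, Antitone fun t => V t ω := by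
    intro ω t t' htt'
    refine ENNReal.toReal_mono (measure_ne_top _ _) (measure_mono fun s hs => ?_)
    exact le_trans htt' hs
  have hW2 : ∀ t, MemLp (W t) 2 μ := by
    intro t
    refine MemLp.of_bound (hW_meas t).aestronglyMeasurable 1 (ae_of_all _ fun ω => ?_)
    rw [Real.norm_eq_abs, abs_of_nonneg (hW01 t ω).1]
    exact (hW01 t ω).2
  have hV2 : ∀ t, MemLp (V t) 2 μ := by
    intro t
    refine MemLp.of_bound (hV_meas t).aestronglyMeasurable 1 (ae_of_all _ fun ω => ?_)
    rw [Real.norm_eq_abs, abs_of_nonneg (hV01 t ω).1]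
    exact (hV01 t ω).2
  have hvarW_eq : ∀ t, variance (W t) μ =
      (∫ ω, (W t ω)^2 ∂μ) - (∫ ω, W t ω ∂μ)^2 := fun t => variance_eq_sub (hW2 t)
  have hvarV_eq : ∀ t, variance (V t) μ =
      (∫ ω, (V t ω)^2 ∂μ) - (∫ ω, V t ω ∂μ)^2 := fun t => variance_eq_sub (hV2 t)
  have hWsq_int : ∀ t, Integrable (fun ω => (W t ω)^2) μ := fun t => (hW2 t).integrable_sq
  have hVsq_int : ∀ t, Integrable (fun ω => (V t ω)^2) μ := fun t => (hV2 t).integrable_sq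
  have hvarW_meas : Measurable (fun t => variance (W t) μ) := by
    have heq : (fun t => variance (W t) μ) =
        fun t => (∫ ω, (W t ω)^2 ∂μ) - (∫ ω, W t ω ∂μ)^2 := funext hvarW_eq
    rw [heq]
    have hA : Antitone fun t => ∫ ω, (W t ω)^2 ∂μ := by
      intro t t' htt'
      refine integral_mono (hWsq_int t') (hWsq_int t) fun ω => ?_
      exact pow_le_pow_left₀ (hW01 t' ω).1 (hWanti ω htt') 2
    have hB : Antitone fun t => ∫ ω, W t ω ∂μ := by
      intro t t' htt'
      exact integral_mono (hW_int t') (hW_int t) fun ω => hWanti ω htt'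
    exact hA.measurable.sub (hB.measurable.pow_const 2)
  have hvarV_meas : Measurable (fun t => variance (V t) μ) := by
    have heq : (fun t => variance (V t) μ) =
        fun t => (∫ ω, (V t ω)^2 ∂μ) - (∫ ω, V t ω ∂μ)^2 := funext hvarV_eq
    rw [heq]
    have hA : Antitone fun t => ∫ ω, (V t ω)^2 ∂μ := by
      intro t t' htt'
      refine integral_mono (hVsq_int t') (hVsq_int t) fun ω => ?_
      exact pow_le_pow_left₀ (hV01 t' ω).1 (hVanti ω htt') 2
    have hB : Antitone fun t => ∫ ω, V t ω ∂μ := by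
      intro t t' htt'
      exact integral_mono (hV_int t') (hV_int t) fun ω => hVanti ω htt'
    exact hA.measurable.sub (hB.measurable.pow_const 2)
  -- assembly
  simp only [hhK, hgK]
  rw [integral_map hE.aemeasurable hvarW_meas.aestronglyMeasurable,
    setIntegral_map measurableSet_Ioi hvarV_meas.aestronglyMeasurable (hE.abs).aemeasurable]
  have hrestrict : μ.restrict ((fun ω => |E ω|) ⁻¹' Set.Ioi 0) = μ := by
    refine Measure.restrict_eq_self_of_ae_mem ?_
    filter_upwards [hEne] with ω hω
    simp [abs_pos, hω]
  rw [hrestrict, ← integral_const_mul]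
  refine integral_congr_ae ?_
  filter_upwards [hEne] with ω hω
  have habs : 0 < |E ω| := abs_pos.mpr hω
  have e1 : variance (V (|E ω|)) μ = 4 * variance (W (|E ω|)) μ := by
    rw [variance_congr_ae' (key1 _ habs), variance_const_mul]
    norm_num
  have e2 : variance (W (|E ω|)) μ = variance (W (E ω)) μ := by
    rcases hω.lt_or_gt with h | h
    · rw [abs_of_neg h]
      rw [variance_congr_ae' (key2 (E ω)), variance_const_sub' (hW_int (E ω))]
    · rw [abs_of_pos h]
  rw [e1, e2]
end
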